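/- arXiv:1908.04665 — 2 statements merged into one kernel-verified Lean document; each statement's English description precedes it below -/
import Mathlib

section
/- Let (γ_n) be monotone increasing with γ_0 = 0 and suppose the difference sequence Γ_n = γ_{n+1}−γ_n is monotone increasing (i.e. γ_{n+2}−2γ_{n+1}+γ_n ≥ 0 for all n). If F ∈ X_γ has finitely many zeros α_1,…,α_m in D, with Blaschke decomposition F = B·G, then ‖G‖_{X_γ}^2 ≤ ‖F‖_{X_γ}^2 − Σ_{j=1}^m (1−|α_j|^2)·‖G(e^{i·})/(1−ᾱ_j e^{i·})‖_{Y_γ}^2. -/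
open Finset

noncomputable def xnorm2 (γ : ℕ → ℝ) (a : ℕ → ℂ) : ℝ := ∑' n, γ n * ‖a n‖ ^ 2

noncomputable def ynorm2 (γ : ℕ → ℝ) (a : ℕ → ℂ) : ℝ :=
  ∑' n, (γ (n + 1) - γ n) * ‖a n‖ ^ 2

def IsCoeffs (a : ℕ → ℂ) (F : ℂ → ℂ) : Prop :=
  ∀ z : ℂ, ‖z‖ < 1 → HasSum (fun n => a n * z ^ n) (F z)

open Filter Topology

lemma norm_ident (β a b : ℂ) :
    ‖a - β * b‖ ^ 2 - ‖b - (starRingEnd ℂ) β * a‖ ^ 2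
      = (1 - ‖β‖ ^ 2) * (‖a‖ ^ 2 - ‖b‖ ^ 2) := by
  have h : ∀ x : ℂ, ‖x‖ ^ 2 = Complex.normSq x := fun x => by
    exact Complex.sq_norm x
  simp only [h, Complex.normSq_apply, Complex.sub_re, Complex.sub_im, Complex.mul_re,
    Complex.mul_im, Complex.conj_re, Complex.conj_im]
  ring

lemma IsCoeffs.bound {u : ℕ → ℂ} {U : ℂ → ℂ} (hu : IsCoeffs u U) {r : ℝ}
    (h0 : 0 ≤ r) (h1 : r < 1) : ∃ M : ℝ, 0 ≤ M ∧ ∀ n, ‖u n‖ * r ^ n ≤ M := by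
  have hz : ‖(r : ℂ)‖ < 1 := by
    rwa [Complex.norm_real, Real.norm_eq_abs, abs_of_nonneg h0]
  have hs := (hu _ hz).summable
  have ht : Tendsto (fun n => ‖u n * (r : ℂ) ^ n‖) atTop (𝓝 0) := by
    simpa using hs.tendsto_atTop_zero.norm
  obtain ⟨M, hM⟩ := ht.bddAbove_range
  have key : ∀ n, ‖u n‖ * r ^ n ≤ M := by
    intro n
    have := hM (Set.mem_range_self n)
    simpa [norm_mul, norm_pow, Complex.norm_real, Real.norm_eq_abs, abs_of_nonneg h0]
      using this
  exact ⟨M, le_trans (by positivity) (key 0), key⟩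


lemma IsCoeffs.summable_norm {u : ℕ → ℂ} {U : ℂ → ℂ} (hu : IsCoeffs u U) {z : ℂ}
    (hz : ‖z‖ < 1) : Summable fun n => ‖u n * z ^ n‖ := by
  set r : ℝ := (1 + ‖z‖) / 2 with hr
  have hz0 := norm_nonneg z
  have hr0 : 0 < r := by positivity
  have hr1 : r < 1 := by simp only [hr]; linarith
  have hzr : ‖z‖ < r := by simp only [hr]; linarith
  obtain ⟨M, hM0, hM⟩ := hu.bound hr0.le hr1
  have hq0 : 0 ≤ ‖z‖ / r := by positivity
  have hq1 : ‖z‖ / r < 1 := (div_lt_one hr0).2 hzr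
  refine Summable.of_nonneg_of_le (fun n => norm_nonneg _) (fun n => ?_)
    ((summable_geometric_of_lt_one hq0 hq1).mul_left M)
  have h1 : ‖z‖ ^ n = (‖z‖ / r) ^ n * r ^ n := by
    rw [div_pow]; field_simp
  calc ‖u n * z ^ n‖ = (‖u n‖ * r ^ n) * (‖z‖ / r) ^ n := by
        rw [norm_mul, norm_pow, h1]; ring
    _ ≤ M * (‖z‖ / r) ^ n := mul_le_mul_of_nonneg_right (hM n) (by positivity)

lemma coeffs_zero {d : ℕ → ℂ} (h : ∀ z : ℂ, ‖z‖ < 1 → HasSum (fun n => d n * z ^ n) 0) :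
    ∀ n, d n = 0 := by
  have hb : ∃ M : ℝ, 0 ≤ M ∧ ∀ n, ‖d n‖ * (1/2 : ℝ) ^ n ≤ M :=
    IsCoeffs.bound (U := fun _ => 0) h (by norm_num) (by norm_num)
  obtain ⟨M, hM0, hM⟩ := hb
  have hM' : ∀ k, ‖d k‖ ≤ M * 2 ^ k := by
    intro k
    have h2 : (0:ℝ) < 2 ^ k := by positivity
    have := hM k
    rw [div_pow, one_pow, mul_one_div, div_le_iff₀ h2] at this
    exact this
  intro n
  induction n using Nat.strong_induction_on with
  | _ N ih =>
  have key : ∀ r : ℝ, 0 < r → r ≤ 1/4 → ‖d N‖ ≤ (M * 2 ^ N * 4) * r := by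
    intro r hr0 hr4
    have hr1 : ‖(r : ℂ)‖ < 1 := by
      rw [Complex.norm_real, Real.norm_eq_abs, abs_of_nonneg hr0.le]; linarith
    have H := h r hr1
    have hsz : ∑ i ∈ range N, d i * (r:ℂ) ^ i = 0 := by
      apply Finset.sum_eq_zero; intro i hi
      rw [ih i (Finset.mem_range.1 hi)]; ring
    have H1 : HasSum (fun n => d (n + N) * (r:ℂ) ^ (n + N)) 0 := by
      refine (hasSum_nat_add_iff (f := fun n => d n * (r:ℂ) ^ n) N).2 ?_
      rw [hsz, add_zero]; exact H
    have hrN : ((r:ℂ)) ^ N ≠ 0 := pow_ne_zero _ (by exact_mod_cast hr0.ne')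
    have H2 : HasSum (fun n => d (n + N) * (r:ℂ) ^ n) 0 := by
      refine (hasSum_mul_right_iff hrN).1 ?_
      have e : (fun n => d (n + N) * (r:ℂ) ^ n * (r:ℂ) ^ N)
          = fun n => d (n + N) * (r:ℂ) ^ (n + N) := by
        funext n; rw [pow_add]; ring
      rw [e, zero_mul]; exact H1
    have H3 : HasSum (fun n => d (n + 1 + N) * (r:ℂ) ^ (n + 1)) (-(d N)) := by
      refine (hasSum_nat_add_iff (f := fun n => d (n + N) * (r:ℂ) ^ n) 1).2 ?_
      convert H2 using 1
      rfl
      simp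
    have tb : ∀ n, ‖d (n + 1 + N) * (r:ℂ) ^ (n + 1)‖ ≤ (M * 2 ^ N * 2 * r) * (2*r) ^ n := by
      intro n
      rw [norm_mul, norm_pow, Complex.norm_real, Real.norm_eq_abs, abs_of_nonneg hr0.le]
      have e1 : (2:ℝ) ^ (n + 1 + N) = 2 ^ n * 2 * 2 ^ N := by
        rw [pow_add, pow_succ]
      have e2 : r ^ (n + 1) = r ^ n * r := pow_succ r n
      calc ‖d (n + 1 + N)‖ * r ^ (n + 1)
          ≤ (M * 2 ^ (n + 1 + N)) * r ^ (n + 1) :=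
            mul_le_mul_of_nonneg_right (hM' _) (by positivity)
        _ = (M * 2 ^ N * 2 * r) * (2*r) ^ n := by
            rw [e1, e2, mul_pow]; ring
    have h2r : 2 * r < 1 := by linarith
    have h2r0 : (0:ℝ) ≤ 2 * r := by linarith
    have hsg : Summable (fun n => (M * 2 ^ N * 2 * r) * (2*r) ^ n) :=
      (summable_geometric_of_lt_one h2r0 h2r).mul_left _
    have hsn : Summable (fun n => ‖d (n + 1 + N) * (r:ℂ) ^ (n + 1)‖) :=
      Summable.of_nonneg_of_le (fun n => norm_nonneg _) tb hsg
    have hnorm : ‖d N‖ ≤ ∑' n, ‖d (n + 1 + N) * (r:ℂ) ^ (n + 1)‖ := by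
      calc ‖d N‖ = ‖-(d N)‖ := (norm_neg _).symm
        _ = ‖∑' n, d (n + 1 + N) * (r:ℂ) ^ (n + 1)‖ := by rw [H3.tsum_eq]
        _ ≤ _ := norm_tsum_le_tsum_norm hsn
    have t1 : ∑' n, ((M * 2 ^ N * 2 * r) * (2*r) ^ n) = (M * 2 ^ N * 2 * r) * (1 - 2*r)⁻¹ := by
      rw [tsum_mul_left, tsum_geometric_of_lt_one h2r0 h2r]
    have t2 : (1 - 2*r)⁻¹ ≤ 2 := by
      have h12 : (1:ℝ)/2 ≤ 1 - 2*r := by linarith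
      calc (1 - 2*r)⁻¹ ≤ ((1:ℝ)/2)⁻¹ := inv_anti₀ (by norm_num) h12
        _ = 2 := by norm_num
    have hts := Summable.tsum_le_tsum tb hsn hsg
    have hc0 : (0:ℝ) ≤ M * 2 ^ N * 2 * r := by positivity
    nlinarith [hnorm, hts, t1 ▸ hts]
  have hd0 : ‖d N‖ ≤ 0 := by
    by_contra hcon
    push_neg at hcon
    set C := M * 2 ^ N * 4 with hC
    have hC0 : 0 ≤ C := by positivity
    set r := min (1/4 : ℝ) (‖d N‖ / (2*(C+1))) with hrdef
    have hr0 : 0 < r := lt_min (by norm_num) (div_pos hcon (by positivity))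
    have hk := key r hr0 (min_le_left _ _)
    have hr2 : r ≤ ‖d N‖ / (2*(C+1)) := min_le_right _ _
    have h5 : ‖d N‖ ≤ C * (‖d N‖ / (2*(C+1))) :=
      le_trans hk (mul_le_mul_of_nonneg_left hr2 hC0)
    rw [mul_div_assoc', le_div_iff₀ (by positivity)] at h5
    nlinarith
  exact norm_le_zero_iff.1 hd0

lemma coeffs_unique {a b : ℕ → ℂ} {F : ℂ → ℂ} (ha : IsCoeffs a F) (hb : IsCoeffs b F) :
    a = b := by
  funext n
  have h : ∀ z : ℂ, ‖z‖ < 1 → HasSum (fun n => (a n - b n) * z ^ n) 0 := by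
    intro z hz
    simpa [sub_mul] using (ha z hz).sub (hb z hz)
  exact sub_eq_zero.1 (coeffs_zero h n)


noncomputable def divGeom (β : ℂ) (u : ℕ → ℂ) : ℕ → ℂ :=
  fun n => ∑ i ∈ range (n+1), (starRingEnd ℂ) β ^ (n - i) * u i

noncomputable def blaschkeStep (β : ℂ) (u : ℕ → ℂ) : ℕ → ℂ :=
  fun n => (if n = 0 then 0 else divGeom β u (n-1)) - β * divGeom β u n

lemma divGeom_zero (β : ℂ) (u : ℕ → ℂ) : divGeom β u 0 = u 0 := by simp [divGeom]

lemma divGeom_succ (β : ℂ) (u : ℕ → ℂ) (n : ℕ) :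
    divGeom β u (n+1) = (starRingEnd ℂ) β * divGeom β u n + u (n+1) := by
  unfold divGeom
  rw [Finset.sum_range_succ, Nat.sub_self, pow_zero, one_mul, Finset.mul_sum]
  congr 1
  refine Finset.sum_congr rfl fun i hi => ?_
  have hile : i ≤ n := Nat.lt_succ_iff.1 (Finset.mem_range.1 hi)
  rw [show n + 1 - i = (n - i) + 1 from by omega, pow_succ]
  ring

lemma blaschkeStep_zero (β : ℂ) (u : ℕ → ℂ) :
    blaschkeStep β u 0 = -(β * divGeom β u 0) := by simp [blaschkeStep]

lemma blaschkeStep_succ (β : ℂ) (u : ℕ → ℂ) (n : ℕ) :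
    blaschkeStep β u (n+1) = divGeom β u n - β * divGeom β u (n+1) := by
  simp [blaschkeStep]

lemma one_sub_ne {β z : ℂ} (hβ : ‖β‖ < 1) (hz : ‖z‖ < 1) :
    (1 : ℂ) - (starRingEnd ℂ) β * z ≠ 0 := by
  have hβz : ‖(starRingEnd ℂ) β * z‖ < 1 := by
    rw [norm_mul, RCLike.norm_conj]
    nlinarith [norm_nonneg β, norm_nonneg z]
  intro hc
  rw [sub_eq_zero] at hc
  rw [← hc] at hβz
  simp at hβz

lemma isCoeffs_divGeom {u : ℕ → ℂ} {U : ℂ → ℂ} (hu : IsCoeffs u U) {β : ℂ}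
    (hβ : ‖β‖ < 1) :
    IsCoeffs (divGeom β u) (fun z => U z / (1 - (starRingEnd ℂ) β * z)) := by
  intro z hz
  have hβz : ‖(starRingEnd ℂ) β * z‖ < 1 := by
    rw [norm_mul, RCLike.norm_conj]
    nlinarith [norm_nonneg β, norm_nonneg z]
  have hne := one_sub_ne hβ hz
  have hgeo : Summable fun n => ‖((starRingEnd ℂ) β * z) ^ n‖ := by
    simp only [norm_pow]
    exact summable_geometric_of_lt_one (norm_nonneg _) hβz
  have hu' : Summable fun n => ‖u n * z ^ n‖ := hu.summable_norm hz
  have hprod := summable_norm_sum_mul_range_of_summable_norm hgeo hu'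
  have hsum := hprod.of_norm
  have htsum := tsum_mul_tsum_eq_tsum_sum_range_of_summable_norm hgeo hu'
  have hterm : ∀ n, (∑ k ∈ range (n+1), ((starRingEnd ℂ) β * z) ^ k * (u (n-k) * z ^ (n-k)))
      = divGeom β u n * z ^ n := by
    intro n
    rw [divGeom, Finset.sum_mul, ← Finset.sum_range_reflect]
    refine Finset.sum_congr rfl fun i hi => ?_
    have hile : i ≤ n := Nat.lt_succ_iff.1 (Finset.mem_range.1 hi)
    have e1 : n + 1 - 1 - i = n - i := by omega
    have e2 : n - (n - i) = i := by omega
    have e3 : z ^ (n - i) * z ^ i = z ^ n := by rw [← pow_add]; congr 1; omega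
    rw [e1, e2, mul_pow, ← e3]; ring
  have hsum2 : Summable fun n => divGeom β u n * z ^ n := by
    rw [← funext hterm]; exact hsum
  refine (Summable.hasSum_iff hsum2).2 ?_
  rw [show (fun n => divGeom β u n * z ^ n)
      = fun n => ∑ k ∈ range (n+1), ((starRingEnd ℂ) β * z) ^ k * (u (n-k) * z ^ (n-k))
    from (funext hterm).symm]
  rw [← htsum, (hasSum_geometric_of_norm_lt_one hβz).tsum_eq, (hu z hz).tsum_eq,
    inv_mul_eq_div]

lemma isCoeffs_congr {u : ℕ → ℂ} {F F' : ℂ → ℂ} (h : IsCoeffs u F)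
    (he : ∀ z : ℂ, ‖z‖ < 1 → F z = F' z) : IsCoeffs u F' :=
  fun z hz => he z hz ▸ h z hz

lemma isCoeffs_blaschkeStep {u : ℕ → ℂ} {U : ℂ → ℂ} (hu : IsCoeffs u U) {β : ℂ}
    (hβ : ‖β‖ < 1) :
    IsCoeffs (blaschkeStep β u)
      (fun z => ((z - β) / (1 - (starRingEnd ℂ) β * z)) * U z) := by
  intro z hz
  have hne := one_sub_ne hβ hz
  have hH := isCoeffs_divGeom hu hβ z hz
  set h := divGeom β u with hh
  set Hz := U z / (1 - (starRingEnd ℂ) β * z) with hHz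
  have h1 : HasSum (fun n => h n * z ^ n * z) (Hz * z) := hH.mul_right z
  have h2 : HasSum (fun n => (if n = 0 then 0 else h (n-1)) * z ^ n) (Hz * z) := by
    have e : (fun n => h n * z ^ n * z)
        = fun n => (if n + 1 = 0 then 0 else h (n + 1 - 1)) * z ^ (n + 1) := by
      funext n; simp [pow_succ]; ring
    rw [e] at h1
    have := (hasSum_nat_add_iff
      (f := fun n => (if n = 0 then 0 else h (n-1)) * z ^ n) 1).1 h1
    simpa using this
  have h3 : HasSum (fun n => (β * h n) * z ^ n) (β * Hz) := by
    have := hH.mul_left β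
    simpa [mul_assoc] using this
  have h4 := h2.sub h3
  have e2 : (fun n => (if n = 0 then 0 else h (n-1)) * z ^ n - (β * h n) * z ^ n)
      = fun n => blaschkeStep β u n * z ^ n := by
    funext n; simp only [blaschkeStep, ← hh]; ring
  have e3 : Hz * z - β * Hz = ((z - β) / (1 - (starRingEnd ℂ) β * z)) * U z := by
    rw [hHz]; field_simp
  rw [e2, e3] at h4
  exact h4


lemma htail_of_isCoeffs {h : ℕ → ℂ} {H : ℂ → ℂ} (hh : IsCoeffs h H) {β : ℂ}
    (hβ : ‖β‖ < 1) {c : ℕ → ℂ} (rel : ∀ n, c (n+1) = h n - β * h (n+1)) (n : ℕ) :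
    HasSum (fun j => β ^ j * c (n + 1 + j)) (h n) := by
  set r : ℝ := (1 + ‖β‖) / 2 with hrdef
  have hβ0 := norm_nonneg β
  have hr0 : 0 < r := by positivity
  have hr1 : r < 1 := by simp only [hrdef]; linarith
  have hβr : ‖β‖ < r := by simp only [hrdef]; linarith
  obtain ⟨M, hM0, hM⟩ := hh.bound hr0.le hr1
  set s : ℝ := r⁻¹ with hsdef
  have hs0 : 0 < s := inv_pos.2 hr0
  have hrs : r * s = 1 := mul_inv_cancel₀ hr0.ne'
  have hs1 : 1 ≤ s := by nlinarith
  have hMk : ∀ k, ‖h k‖ ≤ M * s ^ k := by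
    intro k
    have hrsk : r ^ k * s ^ k = 1 := by rw [← mul_pow, hrs, one_pow]
    calc ‖h k‖ = ‖h k‖ * (r ^ k * s ^ k) := by rw [hrsk, mul_one]
      _ = (‖h k‖ * r ^ k) * s ^ k := by ring
      _ ≤ M * s ^ k := mul_le_mul_of_nonneg_right (hM k) (by positivity)
  set q : ℝ := ‖β‖ * s with hqdef
  have hq0 : 0 ≤ q := by positivity
  have hq1 : q < 1 := by nlinarith
  have tel : ∀ J, ∑ j ∈ range J, β ^ j * c (n + 1 + j) = h n - β ^ J * h (n + J) := by
    intro J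
    induction J with
    | zero => simp
    | succ J ihJ =>
      rw [Finset.sum_range_succ, ihJ, show n + 1 + J = n + J + 1 from by omega,
        show n + (J + 1) = n + J + 1 from by omega, rel (n + J), pow_succ]
      ring
  have cb : ∀ j, ‖β ^ j * c (n + 1 + j)‖ ≤ (2 * M * s ^ (n + 1)) * q ^ j := by
    intro j
    rw [show n + 1 + j = n + j + 1 from by omega, norm_mul, norm_pow, rel (n + j)]
    have h1 : ‖h (n + j) - β * h (n + j + 1)‖ ≤ M * s ^ (n + j) + M * s ^ (n + j + 1) := by
      calc ‖h (n + j) - β * h (n + j + 1)‖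
          ≤ ‖h (n + j)‖ + ‖β * h (n + j + 1)‖ := norm_sub_le _ _
        _ = ‖h (n + j)‖ + ‖β‖ * ‖h (n + j + 1)‖ := by rw [norm_mul]
        _ ≤ M * s ^ (n + j) + 1 * (M * s ^ (n + j + 1)) :=
            add_le_add (hMk _)
              (mul_le_mul hβ.le (hMk _) (norm_nonneg _) zero_le_one)
        _ = M * s ^ (n + j) + M * s ^ (n + j + 1) := by ring
    have h2 : M * s ^ (n + j) ≤ M * s ^ (n + j + 1) :=
      mul_le_mul_of_nonneg_left (pow_le_pow_right₀ hs1 (by omega)) hM0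
    calc ‖β‖ ^ j * ‖h (n + j) - β * h (n + j + 1)‖
        ≤ ‖β‖ ^ j * (2 * (M * s ^ (n + j + 1))) := by
          refine mul_le_mul_of_nonneg_left ?_ (by positivity)
          linarith
      _ = (2 * M * s ^ (n + 1)) * q ^ j := by
          rw [hqdef, show n + j + 1 = (n + 1) + j from by omega, pow_add, mul_pow]
          ring
  have hsum : Summable fun j => β ^ j * c (n + 1 + j) :=
    Summable.of_norm (Summable.of_nonneg_of_le (fun _ => norm_nonneg _) cb
      ((summable_geometric_of_lt_one hq0 hq1).mul_left _))
  have hz : Tendsto (fun J => β ^ J * h (n + J)) atTop (𝓝 0) := by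
    refine squeeze_zero_norm (a := fun J => (M * s ^ n) * q ^ J) (fun J => ?_) ?_
    · 
      rw [norm_mul, norm_pow]
      calc ‖β‖ ^ J * ‖h (n + J)‖
          ≤ ‖β‖ ^ J * (M * s ^ (n + J)) :=
            mul_le_mul_of_nonneg_left (hMk _) (by positivity)
        _ = (M * s ^ n) * q ^ J := by rw [pow_add, mul_pow]; ring
    · simpa using (tendsto_pow_atTop_nhds_zero_of_lt_one hq0 hq1).const_mul (M * s ^ n)
  have hlim : Tendsto (fun J => ∑ j ∈ range J, β ^ j * c (n + 1 + j)) atTop (𝓝 (h n)) := by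
    rw [funext tel]
    have h6 : Tendsto (fun J => h n - β ^ J * h (n + J)) atTop (𝓝 (h n - 0)) :=
      Tendsto.sub tendsto_const_nhds hz
    simpa using h6
  have ht := hsum.hasSum
  have := tendsto_nhds_unique ht.tendsto_sum_nat hlim
  rwa [this] at ht


lemma step {w : ℕ → ℝ} (hw : Monotone w) (hw0 : 0 ≤ w 0) {β : ℂ} (hβ : ‖β‖ < 1)
    {h c g' : ℕ → ℂ}
    (hc0 : c 0 = -(β * h 0)) (hcS : ∀ n, c (n+1) = h n - β * h (n+1))
    (hg0 : g' 0 = h 0) (hgS : ∀ n, g' (n+1) = h (n+1) - (starRingEnd ℂ) β * h n)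
    (htail : ∀ n, HasSum (fun j => β ^ j * c (n+1+j)) (h n))
    (hsum : Summable fun n => w n * ‖c n‖ ^ 2) :
    (Summable fun n => w n * ‖g' n‖ ^ 2) ∧
      (Summable fun n => (w (n+1) - w n) * ‖h n‖ ^ 2) ∧
      ∑' n, w n * ‖c n‖ ^ 2
        = (∑' n, w n * ‖g' n‖ ^ 2) + (1 - ‖β‖ ^ 2) * ∑' n, (w (n+1) - w n) * ‖h n‖ ^ 2 := by
  have wnn : ∀ n, 0 ≤ w n := fun n => hw0.trans (hw (Nat.zero_le n))
  have Δnn : ∀ n, 0 ≤ w (n+1) - w n := fun n => sub_nonneg.2 (hw (Nat.le_succ n))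
  have hβ0 := norm_nonneg β
  have hβ2 : ‖β‖ ^ 2 < 1 := by nlinarith
  set aa : ℕ → ℝ := fun n => w n * ‖c n‖ ^ 2 with haa
  have aann : ∀ n, 0 ≤ aa n := fun n => mul_nonneg (wnn n) (by positivity)
  -- finite Abel identity
  have FIN : ∀ N, ∑ n ∈ range (N+1), w n * ‖c n‖ ^ 2
      = (∑ n ∈ range (N+1), w n * ‖g' n‖ ^ 2)
        + (1 - ‖β‖ ^ 2) * ((∑ n ∈ range N, (w (n+1) - w n) * ‖h n‖ ^ 2)
            - w N * ‖h N‖ ^ 2) := by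
    intro N
    induction N with
    | zero =>
      simp only [zero_add, Finset.sum_range_one, Finset.range_zero,
        Finset.sum_empty, hc0, hg0]
      rw [norm_neg, norm_mul, mul_pow]
      ring
    | succ N ihN =>
      rw [Finset.sum_range_succ (f := fun n => w n * ‖c n‖ ^ 2),
        Finset.sum_range_succ (f := fun n => w n * ‖g' n‖ ^ 2),
        Finset.sum_range_succ (f := fun n => (w (n+1) - w n) * ‖h n‖ ^ 2), ihN,
        hcS N, hgS N]
      linear_combination (w (N+1)) * norm_ident β (h N) (h (N+1))
  -- tail sums
  have tailS : ∀ N : ℕ, Summable fun j => aa (N+1+j) := by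
    intro N
    have h1 : Summable fun j => aa (j + (N+1)) := (summable_nat_add_iff (N+1)).2 hsum
    have e : (fun j => aa (N+1+j)) = fun j => aa (j + (N+1)) := by
      funext j; rw [Nat.add_comm]
    rw [e]; exact h1
  set tail : ℕ → ℝ := fun N => ∑' j, aa (N+1+j) with htaildef
  have tailnn : ∀ N, 0 ≤ tail N := fun N => tsum_nonneg fun j => aann _
  have tailLe : ∀ N, tail N ≤ ∑' n, aa n := by
    intro N
    have h5 := Summable.sum_add_tsum_nat_add (f := aa) (N+1) hsum
    have h6 : (0:ℝ) ≤ ∑ i ∈ range (N+1), aa i := Finset.sum_nonneg fun i _ => aann i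
    have e : tail N = ∑' j, aa (j + (N+1)) := by
      rw [htaildef]; exact tsum_congr fun j => by rw [Nat.add_comm]
    rw [e]; linarith
  -- boundary bound
  have BD : ∀ N, w N * ‖h N‖ ^ 2 ≤ ((1 - ‖β‖)⁻¹) ^ 2 * tail N := by
    intro N
    rcases eq_or_lt_of_le (wnn N) with hwN | hwN
    · rw [← hwN, zero_mul]
      exact mul_nonneg (by positivity) (tailnn N)
    have hbd : ∀ j, ‖c (N+1+j)‖ ≤ Real.sqrt (tail N / w N) := by
      intro j
      have h1 : w N * ‖c (N+1+j)‖ ^ 2 ≤ aa (N+1+j) := by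
        rw [haa]
        exact mul_le_mul_of_nonneg_right (hw (by omega)) (by positivity)
      have h2 : aa (N+1+j) ≤ tail N := Summable.le_tsum (tailS N) j fun k _ => aann _
      have h3 : ‖c (N+1+j)‖ ^ 2 ≤ tail N / w N := by
        rw [le_div_iff₀ hwN]; linarith
      calc ‖c (N+1+j)‖ = Real.sqrt (‖c (N+1+j)‖ ^ 2) :=
            (Real.sqrt_sq (norm_nonneg _)).symm
        _ ≤ Real.sqrt (tail N / w N) := Real.sqrt_le_sqrt h3
    have hβ1 : 0 < 1 - ‖β‖ := by linarith
    have hhN : ‖h N‖ ≤ Real.sqrt (tail N / w N) * (1 - ‖β‖)⁻¹ := by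
      have hsg : Summable fun j : ℕ => ‖β‖ ^ j * Real.sqrt (tail N / w N) :=
        (summable_geometric_of_lt_one hβ0 hβ).mul_right _
      have hbd2 : ∀ j, ‖β ^ j * c (N+1+j)‖ ≤ ‖β‖ ^ j * Real.sqrt (tail N / w N) := by
        intro j
        rw [norm_mul, norm_pow]
        exact mul_le_mul_of_nonneg_left (hbd j) (by positivity)
      have hns : Summable fun j => ‖β ^ j * c (N+1+j)‖ :=
        Summable.of_nonneg_of_le (fun j => norm_nonneg _) hbd2 hsg
      calc ‖h N‖ = ‖∑' j, β ^ j * c (N+1+j)‖ := by rw [(htail N).tsum_eq]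
        _ ≤ ∑' j, ‖β ^ j * c (N+1+j)‖ := norm_tsum_le_tsum_norm hns
        _ ≤ ∑' j : ℕ, ‖β‖ ^ j * Real.sqrt (tail N / w N) := Summable.tsum_le_tsum hbd2 hns hsg
        _ = Real.sqrt (tail N / w N) * (1 - ‖β‖)⁻¹ := by
            rw [tsum_mul_right, tsum_geometric_of_lt_one hβ0 hβ, mul_comm]
    have h4 : ‖h N‖ ^ 2 ≤ (tail N / w N) * ((1 - ‖β‖)⁻¹) ^ 2 := by
      have := pow_le_pow_left₀ (norm_nonneg _) hhN 2
      rwa [mul_pow, Real.sq_sqrt (div_nonneg (tailnn N) hwN.le)] at this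
    calc w N * ‖h N‖ ^ 2 ≤ w N * ((tail N / w N) * ((1 - ‖β‖)⁻¹) ^ 2) :=
          mul_le_mul_of_nonneg_left h4 hwN.le
      _ = w N * (tail N / w N) * ((1 - ‖β‖)⁻¹) ^ 2 := by ring
      _ = ((1 - ‖β‖)⁻¹) ^ 2 * tail N := by
          have e : w N * (tail N / w N) = tail N := by
            field_simp [hwN.ne']
          rw [e]; ring
  -- tail tends to zero
  have TT : Tendsto tail atTop (𝓝 0) := by
    have t1 := tendsto_sum_nat_add aa
    have t2 := t1.comp (tendsto_add_atTop_nat 1)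
    have e : tail = (fun i => ∑' k, aa (k + i)) ∘ (fun N => N + 1) := by
      funext N
      simp only [Function.comp_apply, htaildef]
      exact tsum_congr fun j => by rw [Nat.add_comm]
    rw [e]; exact t2
  have BT0 : Tendsto (fun N => w N * ‖h N‖ ^ 2) atTop (𝓝 0) := by
    refine squeeze_zero (fun N => mul_nonneg (wnn N) (by positivity)) BD ?_
    have := TT.const_mul (((1 - ‖β‖)⁻¹) ^ 2)
    simpa using this
  have hβ2' : 0 < 1 - ‖β‖ ^ 2 := by linarith
  have B0nn : 0 ≤ ((1 - ‖β‖)⁻¹) ^ 2 * ∑' n, aa n :=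
    mul_nonneg (by positivity) (tsum_nonneg aann)
  have BDtot : ∀ N, w N * ‖h N‖ ^ 2 ≤ ((1 - ‖β‖)⁻¹) ^ 2 * ∑' n, aa n := fun N =>
    le_trans (BD N) (mul_le_mul_of_nonneg_left (tailLe N) (by positivity))
  have sumLe : ∀ N, ∑ n ∈ range N, aa n ≤ ∑' n, aa n := fun N =>
    Summable.sum_le_tsum (range N) (fun i _ => aann i) hsum
  -- summability of the g' series
  have Sg : Summable fun n => w n * ‖g' n‖ ^ 2 := by
    refine summable_of_sum_range_le (c := (∑' n, aa n)
      + (1 - ‖β‖ ^ 2) * (((1 - ‖β‖)⁻¹) ^ 2 * ∑' n, aa n))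
      (fun n => mul_nonneg (wnn n) (by positivity)) ?_
    intro N
    rcases N with _ | N
    · simp only [Finset.range_zero, Finset.sum_empty]
      nlinarith [(tsum_nonneg aann : (0:ℝ) ≤ ∑' n, aa n)]
    · have hT : (0:ℝ) ≤ ∑ n ∈ range N, (w (n+1) - w n) * ‖h n‖ ^ 2 :=
        Finset.sum_nonneg fun n _ => mul_nonneg (Δnn n) (by positivity)
      have := FIN N
      have h7 := sumLe (N+1)
      have h8 := mul_le_mul_of_nonneg_left (BDtot N) hβ2'.le
      nlinarith
  -- summability of the h series
  have Sh : Summable fun n => (w (n+1) - w n) * ‖h n‖ ^ 2 := by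
    refine summable_of_sum_range_le
      (c := (∑' n, aa n) / (1 - ‖β‖ ^ 2) + ((1 - ‖β‖)⁻¹) ^ 2 * ∑' n, aa n)
      (fun n => mul_nonneg (Δnn n) (by positivity)) ?_
    intro N
    have hg'nn : (0:ℝ) ≤ ∑ n ∈ range (N+1), w n * ‖g' n‖ ^ 2 :=
      Finset.sum_nonneg fun n _ => mul_nonneg (wnn n) (by positivity)
    rw [← sub_le_iff_le_add, le_div_iff₀ hβ2']
    nlinarith [FIN N, sumLe (N+1), mul_le_mul_of_nonneg_left (BDtot N) hβ2'.le, hg'nn]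
  -- pass to the limit
  have L1 : Tendsto (fun N => ∑ n ∈ range (N+1), aa n) atTop (𝓝 (∑' n, aa n)) :=
    hsum.hasSum.tendsto_sum_nat.comp (tendsto_add_atTop_nat 1)
  have L2 : Tendsto (fun N => ∑ n ∈ range (N+1), w n * ‖g' n‖ ^ 2) atTop
      (𝓝 (∑' n, w n * ‖g' n‖ ^ 2)) :=
    Sg.hasSum.tendsto_sum_nat.comp (tendsto_add_atTop_nat 1)
  have L3 : Tendsto (fun N => ∑ n ∈ range N, (w (n+1) - w n) * ‖h n‖ ^ 2) atTop
      (𝓝 (∑' n, (w (n+1) - w n) * ‖h n‖ ^ 2)) :=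
    Sh.hasSum.tendsto_sum_nat
  have LR : Tendsto (fun N => (∑ n ∈ range (N+1), w n * ‖g' n‖ ^ 2)
      + (1 - ‖β‖ ^ 2) * ((∑ n ∈ range N, (w (n+1) - w n) * ‖h n‖ ^ 2)
          - w N * ‖h N‖ ^ 2)) atTop
      (𝓝 ((∑' n, w n * ‖g' n‖ ^ 2)
        + (1 - ‖β‖ ^ 2) * ((∑' n, (w (n+1) - w n) * ‖h n‖ ^ 2) - 0))) :=
    L2.add ((L3.sub BT0).const_mul _)
  have := tendsto_nhds_unique (funext FIN ▸ L1) LR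
  rw [sub_zero] at this
  exact ⟨Sg, Sh, this⟩


noncomputable def mulB : List ℂ → (ℕ → ℂ) → ℕ → ℂ
  | [], u => u
  | β :: L, u => blaschkeStep β (mulB L u)

noncomputable def prodB (L : List ℂ) (U : ℂ → ℂ) : ℂ → ℂ :=
  fun z => (L.map (fun β => (z - β) / (1 - (starRingEnd ℂ) β * z))).prod * U z

lemma isCoeffs_mulB {L : List ℂ} (hL : ∀ β ∈ L, ‖β‖ < 1) {u : ℕ → ℂ} {U : ℂ → ℂ}
    (hu : IsCoeffs u U) : IsCoeffs (mulB L u) (prodB L U) := by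
  induction L with
  | nil =>
    exact isCoeffs_congr hu fun z _ => by simp [prodB]
  | cons β L ih =>
    have hβ : ‖β‖ < 1 := hL β List.mem_cons_self
    have ih' := ih fun b hb => hL b (List.mem_cons_of_mem _ hb)
    have h1 := isCoeffs_blaschkeStep ih' hβ
    exact isCoeffs_congr h1 fun z hz => by
      simp only [prodB, List.map_cons, List.prod_cons, mulB]
      ring

-- one-factor step, packaged
lemma step' {w : ℕ → ℝ} (hw : Monotone w) (hw0 : 0 ≤ w 0) {β : ℂ} (hβ : ‖β‖ < 1)
    {u' : ℕ → ℂ} {U' : ℂ → ℂ} (hu' : IsCoeffs u' U') :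
    (Summable fun n => w n * ‖blaschkeStep β u' n‖ ^ 2) →
    (Summable fun n => w n * ‖u' n‖ ^ 2) ∧
      (Summable fun n => (w (n+1) - w n) * ‖divGeom β u' n‖ ^ 2) ∧
      ∑' n, w n * ‖blaschkeStep β u' n‖ ^ 2
        = (∑' n, w n * ‖u' n‖ ^ 2)
          + (1 - ‖β‖ ^ 2) * ∑' n, (w (n+1) - w n) * ‖divGeom β u' n‖ ^ 2 := by
  intro hs
  exact step hw hw0 hβ (blaschkeStep_zero β u') (blaschkeStep_succ β u')
    (divGeom_zero β u').symm
    (fun n => by rw [divGeom_succ]; ring)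
    (htail_of_isCoeffs (isCoeffs_divGeom hu' hβ) hβ (blaschkeStep_succ β u'))
    hs

lemma peel {w : ℕ → ℝ} (hw : Monotone w) (hw0 : 0 ≤ w 0) :
    ∀ (L : List ℂ), (∀ β ∈ L, ‖β‖ < 1) → ∀ (u : ℕ → ℂ) (U : ℂ → ℂ), IsCoeffs u U →
      (Summable fun n => w n * ‖mulB L u n‖ ^ 2) →
      (Summable fun n => w n * ‖u n‖ ^ 2) ∧
        ∑' n, w n * ‖u n‖ ^ 2 ≤ ∑' n, w n * ‖mulB L u n‖ ^ 2 := by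
  intro L
  induction L with
  | nil => exact fun _ u U _ hs => ⟨hs, le_refl _⟩
  | cons β L ih =>
    intro hL u U hu hs
    have hβ : ‖β‖ < 1 := hL β List.mem_cons_self
    have hL' : ∀ b ∈ L, ‖b‖ < 1 := fun b hb => hL b (List.mem_cons_of_mem _ hb)
    have hu' : IsCoeffs (mulB L u) (prodB L U) := isCoeffs_mulB hL' hu
    obtain ⟨hsg, hsh, heq⟩ := step' hw hw0 hβ hu' hs
    obtain ⟨hsu, hle⟩ := ih hL' u U hu hsg
    refine ⟨hsu, hle.trans ?_⟩
    have hpos : 0 ≤ (1 - ‖β‖ ^ 2) * ∑' n, (w (n+1) - w n) * ‖divGeom β (mulB L u) n‖ ^ 2 := by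
      refine mul_nonneg (by nlinarith [norm_nonneg β]) (tsum_nonneg fun n =>
        mul_nonneg (sub_nonneg.2 (hw (Nat.le_succ n))) (by positivity))
    have : ∑' n, w n * ‖mulB (β :: L) u n‖ ^ 2
        = ∑' n, w n * ‖blaschkeStep β (mulB L u) n‖ ^ 2 := rfl
    rw [this, heq]
    linarith

lemma main {γ : ℕ → ℝ} (hmono : Monotone γ) (hγ0 : 0 ≤ γ 0)
    (hconv : ∀ n, γ (n+1) - γ n ≤ γ (n+2) - γ (n+1)) :
    ∀ (L : List ℂ), (∀ β ∈ L, ‖β‖ < 1) → ∀ (g : ℕ → ℂ) (G : ℂ → ℂ), IsCoeffs g G →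
      (Summable fun n => γ n * ‖mulB L g n‖ ^ 2) →
      (Summable fun n => γ n * ‖g n‖ ^ 2) ∧
        (∀ β ∈ L, Summable fun n => (γ (n+1) - γ n) * ‖divGeom β g n‖ ^ 2) ∧
        (∑' n, γ n * ‖g n‖ ^ 2)
            + (L.map (fun β => (1 - ‖β‖ ^ 2)
                * ∑' n, (γ (n+1) - γ n) * ‖divGeom β g n‖ ^ 2)).sum
          ≤ ∑' n, γ n * ‖mulB L g n‖ ^ 2 := by
  have hΔmono : Monotone fun n => γ (n+1) - γ n := monotone_nat_of_le_succ hconv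
  have hΔ0 : 0 ≤ γ (0+1) - γ 0 := sub_nonneg.2 (hmono (Nat.le_succ 0))
  intro L
  induction L with
  | nil =>
    intro _ g G _ hs
    refine ⟨hs, by simp, ?_⟩
    simp only [List.map_nil, List.sum_nil, add_zero]
    exact le_refl _
  | cons β L ih =>
    intro hL g G hg hs
    have hβ : ‖β‖ < 1 := hL β List.mem_cons_self
    have hL' : ∀ b ∈ L, ‖b‖ < 1 := fun b hb => hL b (List.mem_cons_of_mem _ hb)
    have hu' : IsCoeffs (mulB L g) (prodB L G) := isCoeffs_mulB hL' hg
    obtain ⟨hsg', hsh, heq⟩ := step' hmono hγ0 hβ hu' hs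
    obtain ⟨hsg, hKs, hineq⟩ := ih hL' g G hg hsg'
    have hβpos : 0 ≤ 1 - ‖β‖ ^ 2 := by nlinarith [norm_nonneg β]
    -- commutation of divGeom with mulB
    have hcomm : divGeom β (mulB L g) = mulB L (divGeom β g) := by
      refine coeffs_unique (F := fun z => prodB L G z / (1 - (starRingEnd ℂ) β * z))
        (isCoeffs_divGeom hu' hβ) ?_
      refine isCoeffs_congr (isCoeffs_mulB hL' (isCoeffs_divGeom hg hβ)) fun z hz => ?_
      simp only [prodB]
      rw [mul_div_assoc]
    have hp := peel hΔmono hΔ0 L hL' (divGeom β g) _ (isCoeffs_divGeom hg hβ)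
      (by rw [← hcomm]; exact hsh)
    obtain ⟨hKβ, hKle⟩ := hp
    refine ⟨hsg, ?_, ?_⟩
    · intro b hb
      rcases List.mem_cons.1 hb with hb1 | hb2
      · rw [hb1]; exact hKβ
      · exact hKs b hb2
    · simp only [List.map_cons, List.sum_cons]
      have h2 : (1 - ‖β‖ ^ 2) * ∑' n, (γ (n+1) - γ n) * ‖divGeom β g n‖ ^ 2
          ≤ (1 - ‖β‖ ^ 2) * ∑' n, (γ (n+1) - γ n) * ‖divGeom β (mulB L g) n‖ ^ 2 := by
        refine mul_le_mul_of_nonneg_left ?_ hβpos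
        rw [hcomm]; exact hKle
      have h3 : ∑' n, γ n * ‖mulB (β :: L) g n‖ ^ 2
          = ∑' n, γ n * ‖blaschkeStep β (mulB L g) n‖ ^ 2 := rfl
      rw [h3, heq]
      linarith


/-- Theorem 1: if the differences `γ_{n+1}-γ_n` are monotone increasing and `F ∈ X_γ`
has finitely many zeros `α_1,…,α_m` in `𝔻` with Blaschke decomposition `F = B·G`, then
`‖G‖_{X_γ}² ≤ ‖F‖_{X_γ}² − Σ_j (1-|α_j|²)‖G/(1-ᾱ_j·)‖_{Y_γ}²`. -/
theorem stmt4 (γ : ℕ → ℝ) (hmono : Monotone γ) (h0 : γ 0 = 0)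
    (hconv : ∀ n, γ (n + 1) - γ n ≤ γ (n + 2) - γ (n + 1))
    (m : ℕ) (α : ℕ → ℂ) (hα : ∀ j ∈ Icc 1 m, ‖α j‖ < 1)
    (F G : ℂ → ℂ) (f g : ℕ → ℂ) (K : ℕ → ℕ → ℂ)
    (hf : IsCoeffs f F) (hg : IsCoeffs g G)
    (hG0 : ∀ z : ℂ, ‖z‖ < 1 → G z ≠ 0)
    (hfac : ∀ z : ℂ, ‖z‖ < 1 →
      F z = (∏ j ∈ Icc 1 m, (z - α j) / (1 - (starRingEnd ℂ) (α j) * z)) * G z)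
    -- `K j` are the Taylor coefficients of `G(z)/(1-ᾱ_j z)`
    (hK : ∀ j ∈ Icc 1 m, ∀ z : ℂ, ‖z‖ < 1 →
      HasSum (fun n => K j n * z ^ n) (G z / (1 - (starRingEnd ℂ) (α j) * z)))
    (hH2 : Summable fun n => ‖f n‖ ^ 2)
    (hX : Summable fun n => γ n * ‖f n‖ ^ 2) :
    (∀ j ∈ Icc 1 m, Summable fun n => (γ (n + 1) - γ n) * ‖K j n‖ ^ 2) ∧
      xnorm2 γ g ≤
        xnorm2 γ f - ∑ j ∈ Icc 1 m, (1 - ‖α j‖ ^ 2) * ynorm2 γ (K j) := by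
  classical
  set L : List ℂ := (Icc 1 m).toList.map α with hL
  have hLmem : ∀ β ∈ L, ‖β‖ < 1 := by
    intro β hb
    rw [hL] at hb
    obtain ⟨j, hj, rfl⟩ := List.mem_map.1 hb
    exact hα j (Finset.mem_toList.1 hj)
  have hprodeq : ∀ z : ℂ, ‖z‖ < 1 → prodB L G z = F z := by
    intro z hz
    rw [hfac z hz]
    simp only [prodB]
    congr 1
    rw [hL, List.map_map]
    exact Finset.prod_map_toList (Icc 1 m)
      (fun j => (z - α j) / (1 - (starRingEnd ℂ) (α j) * z))
  have hfL : IsCoeffs (mulB L g) F := isCoeffs_congr (isCoeffs_mulB hLmem hg) hprodeq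
  have hfe : f = mulB L g := coeffs_unique hf hfL
  have hKe : ∀ j ∈ Icc 1 m, K j = divGeom (α j) g := fun j hj =>
    coeffs_unique (fun z hz => hK j hj z hz) (isCoeffs_divGeom hg (hα j hj))
  have hsum : Summable fun n => γ n * ‖mulB L g n‖ ^ 2 := by rw [← hfe]; exact hX
  obtain ⟨hsg, hKs, hineq⟩ := main hmono (le_of_eq h0.symm) hconv L hLmem g G hg hsum
  constructor
  · intro j hj
    have hjL : α j ∈ L := by
      rw [hL]; exact List.mem_map.2 ⟨j, Finset.mem_toList.2 hj, rfl⟩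
    rw [hKe j hj]
    exact hKs (α j) hjL
  · have hlist : (L.map (fun β => (1 - ‖β‖ ^ 2)
        * ∑' n, (γ (n+1) - γ n) * ‖divGeom β g n‖ ^ 2)).sum
        = ∑ j ∈ Icc 1 m, (1 - ‖α j‖ ^ 2) * ynorm2 γ (K j) := by
      rw [hL, List.map_map, Finset.sum_map_toList]
      refine Finset.sum_congr rfl fun j hj => ?_
      simp only [Function.comp_apply, ynorm2, hKe j hj]
    have e2 : xnorm2 γ f = ∑' n, γ n * ‖mulB L g n‖ ^ 2 := by
      unfold xnorm2; rw [hfe]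
    rw [show xnorm2 γ g = ∑' n, γ n * ‖g n‖ ^ 2 from rfl, e2, ← hlist]
    linarith
end

section
/- Let (γ_n) be monotone increasing with constant differences, i.e. γ_{n+1}−γ_n ≡ C > 0 for all n ≥ 0, and γ_0 = 0. If F ∈ X_γ has finitely many zeros α_1,…,α_m in D with Blaschke decomposition F = B·G, then the identity ‖G‖_{X_γ}^2 = ‖F‖_{X_γ}^2 − Σ_{j=1}^m (1−|α_j|^2)·‖G(e^{i·})/(1−ᾱ_j e^{i·})‖_{Y_γ}^2 holds. -/
open Finset Filter Topology

set_option maxHeartbeats 1000000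

/-- shift of a coefficient sequence: coefficients of `z * A z`. -/
def shf (a : ℕ → ℂ) : ℕ → ℂ
  | 0 => 0
  | n + 1 => a n

def shfR (u : ℕ → ℝ) : ℕ → ℝ
  | 0 => 0
  | n + 1 => u n

lemma key_alg (α x y : ℂ) :
    ‖x - α * y‖ ^ 2 - ‖y - (starRingEnd ℂ) α * x‖ ^ 2
      = (1 - ‖α‖ ^ 2) * (‖x‖ ^ 2 - ‖y‖ ^ 2) := by
  simp only [Complex.sq_norm, Complex.normSq_apply, Complex.sub_re,
    Complex.sub_im, Complex.mul_re, Complex.mul_im, Complex.conj_re, Complex.conj_im]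
  ring

lemma sq_sub_le (x y : ℂ) : ‖x - y‖ ^ 2 ≤ 2 * ‖x‖ ^ 2 + 2 * ‖y‖ ^ 2 := by
  have h := norm_sub_le x y
  have h2 : ‖x - y‖ ^ 2 ≤ (‖x‖ + ‖y‖) ^ 2 :=
    pow_le_pow_left₀ (norm_nonneg _) h 2
  nlinarith [sq_nonneg (‖x‖ - ‖y‖)]

lemma tsum_cs {f g : ℕ → ℝ} (hf0 : ∀ n, 0 ≤ f n) (hg0 : ∀ n, 0 ≤ g n)
    (hf : Summable (fun n => f n ^ 2)) (hg : Summable (fun n => g n ^ 2)) :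
    (∑' n, f n * g n) ^ 2 ≤ (∑' n, f n ^ 2) * (∑' n, g n ^ 2) := by
  have hfg : Summable (fun n => f n * g n) := by
    refine Summable.of_nonneg_of_le (fun n => mul_nonneg (hf0 n) (hg0 n)) (fun n => ?_)
      (hf.add hg)
    nlinarith [sq_nonneg (f n - g n)]
  have key : ∀ N : ℕ, (∑ n ∈ range N, f n * g n) ^ 2 ≤ (∑' n, f n ^ 2) * (∑' n, g n ^ 2) := by
    intro N
    calc (∑ n ∈ range N, f n * g n) ^ 2
        ≤ (∑ n ∈ range N, f n ^ 2) * (∑ n ∈ range N, g n ^ 2) :=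
          Finset.sum_mul_sq_le_sq_mul_sq _ _ _
      _ ≤ (∑' n, f n ^ 2) * (∑' n, g n ^ 2) := by
          have h1 : (∑ n ∈ range N, f n ^ 2) ≤ ∑' n, f n ^ 2 :=
            Summable.sum_le_tsum _ (fun k _ => sq_nonneg _) hf
          have h2 : (∑ n ∈ range N, g n ^ 2) ≤ ∑' n, g n ^ 2 :=
            Summable.sum_le_tsum _ (fun k _ => sq_nonneg _) hg
          have h3 : (0:ℝ) ≤ ∑ n ∈ range N, f n ^ 2 := Finset.sum_nonneg fun k _ => sq_nonneg _
          have h4 : (0:ℝ) ≤ ∑' n, g n ^ 2 := tsum_nonneg fun k => sq_nonneg _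
          have h5 : (0:ℝ) ≤ ∑ n ∈ range N, g n ^ 2 := Finset.sum_nonneg fun k _ => sq_nonneg _
          nlinarith
  have hlim : Tendsto (fun N => (∑ n ∈ range N, f n * g n) ^ 2) atTop
      (𝓝 ((∑' n, f n * g n) ^ 2)) := (hfg.hasSum.tendsto_sum_nat).pow 2
  exact le_of_tendsto hlim (Filter.Eventually.of_forall key)

lemma tailsum {r : ℝ} (hr0 : 0 ≤ r) (hr1 : r < 1) {s : ℕ → ℝ} (hs0 : ∀ n, 0 ≤ s n)
    (hs : Summable s) : Summable (fun n => ∑' j, r ^ j * s (n + 1 + j)) := by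
  have hB : ∀ k, s k ≤ ∑' i, s i := fun k => Summable.le_tsum hs k (fun j _ => hs0 j)
  have hgeo := summable_geometric_of_lt_one hr0 hr1
  have hinner : ∀ n, Summable (fun j => r ^ j * s (n + 1 + j)) := fun n => by
    refine Summable.of_nonneg_of_le (fun j => mul_nonneg (pow_nonneg hr0 _) (hs0 _))
      (fun j => ?_) (hgeo.mul_right (∑' i, s i))
    exact mul_le_mul_of_nonneg_left (hB _) (pow_nonneg hr0 _)
  refine summable_of_sum_range_le (c := (1 - r)⁻¹ * ∑' i, s i)
    (fun n => tsum_nonneg fun j => mul_nonneg (pow_nonneg hr0 _) (hs0 _)) (fun N => ?_)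
  have hswap : ∑ n ∈ range N, ∑' j, r ^ j * s (n + 1 + j)
      = ∑' j, ∑ n ∈ range N, r ^ j * s (n + 1 + j) :=
    (Summable.tsum_finsetSum (fun n _ => hinner n)).symm
  rw [hswap]
  have h1 : ∀ j : ℕ, ∑ n ∈ range N, r ^ j * s (n + 1 + j) ≤ r ^ j * (∑' i, s i) := by
    intro j
    rw [← Finset.mul_sum]
    refine mul_le_mul_of_nonneg_left ?_ (pow_nonneg hr0 _)
    have himg : ∑ n ∈ range N, s (n + 1 + j) = ∑ k ∈ (range N).image (fun n => n + 1 + j), s k :=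
      (Finset.sum_image (by intros a _ b _ h; simp only at h; omega)).symm
    rw [himg]
    exact Summable.sum_le_tsum _ (fun k _ => hs0 k) hs
  calc ∑' j, ∑ n ∈ range N, r ^ j * s (n + 1 + j)
      ≤ ∑' j : ℕ, r ^ j * (∑' i, s i) := by
        refine Summable.tsum_le_tsum h1 ?_ (hgeo.mul_right _)
        exact summable_sum (fun n _ => hinner n)
    _ = (1 - r)⁻¹ * ∑' i, s i := by
        rw [tsum_mul_right, tsum_geometric_of_lt_one hr0 hr1]

lemma telescope (w : ℕ → ℝ) (c : ℝ) (hwd : ∀ n, w (n + 1) = w n + c) (u : ℕ → ℝ) :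
    ∀ N, ∑ n ∈ range (N + 1), w n * (shfR u n - u n)
      = (∑ k ∈ range N, c * u k) - w N * u N := by
  intro N
  induction N with
  | zero => simp [shfR]
  | succ N ih =>
    rw [Finset.sum_range_succ (f := fun n => w n * (shfR u n - u n)), ih,
      Finset.sum_range_succ (f := fun k => c * u k), hwd N]
    simp only [shfR]
    ring

lemma shfR_zero (u : ℕ → ℝ) : shfR u 0 = 0 := rfl
lemma shfR_succ (u : ℕ → ℝ) (n : ℕ) : shfR u (n + 1) = u n := rfl
lemma shf_zero (a : ℕ → ℂ) : shf a 0 = 0 := rfl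
lemma shf_succ (a : ℕ → ℂ) (n : ℕ) : shf a (n + 1) = a n := rfl

lemma step_s5 (α : ℂ) (w : ℕ → ℝ) (hw0 : ∀ n, 0 ≤ w n) (c : ℝ)
    (hwd : ∀ n, w (n + 1) = w n + c) (Λ p q : ℕ → ℂ)
    (hpΛ : ∀ n, p n = shf Λ n - α * Λ n)
    (hqΛ : ∀ n, q n = Λ n - (starRingEnd ℂ) α * shf Λ n)
    (hΛw : Summable (fun n => w n * ‖Λ n‖ ^ 2))
    (hΛc : Summable (fun n => c * ‖Λ n‖ ^ 2))
    (hΛ0 : Tendsto (fun n => w n * ‖Λ n‖ ^ 2) atTop (𝓝 0))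
    (hpw : Summable (fun n => w n * ‖p n‖ ^ 2)) :
    Summable (fun n => w n * ‖q n‖ ^ 2) ∧
      ∑' n, w n * ‖q n‖ ^ 2
        = ∑' n, w n * ‖p n‖ ^ 2 - (1 - ‖α‖ ^ 2) * ∑' n, c * ‖Λ n‖ ^ 2 := by
  have hshf_norm : ∀ n, ‖shf Λ n‖ ^ 2 = shfR (fun k => ‖Λ k‖ ^ 2) n := by
    intro n
    cases n with
    | zero => simp [shf_zero, shfR_zero]
    | succ n => simp [shf_succ, shfR_succ]
  have hswn : Summable (fun n => w n * ‖shf Λ n‖ ^ 2) := by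
    rw [← summable_nat_add_iff 1]
    have : (fun n => w (n + 1) * ‖shf Λ (n + 1)‖ ^ 2)
        = fun n => w n * ‖Λ n‖ ^ 2 + c * ‖Λ n‖ ^ 2 := by
      funext n; rw [shf_succ, hwd n]; ring
    rw [this]
    exact hΛw.add hΛc
  have hq2 : Summable (fun n => w n * ‖q n‖ ^ 2) := by
    refine Summable.of_nonneg_of_le (fun n => mul_nonneg (hw0 n) (sq_nonneg _)) (fun n => ?_)
      ((hΛw.mul_left 2).add (hswn.mul_left (2 * ‖α‖ ^ 2)))
    have h1 : ‖q n‖ ^ 2 ≤ 2 * ‖Λ n‖ ^ 2 + 2 * (‖α‖ ^ 2 * ‖shf Λ n‖ ^ 2) := by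
      have h2 := sq_sub_le (Λ n) ((starRingEnd ℂ) α * shf Λ n)
      have h3 : ‖(starRingEnd ℂ) α * shf Λ n‖ ^ 2 = ‖α‖ ^ 2 * ‖shf Λ n‖ ^ 2 := by
        rw [norm_mul, mul_pow, RCLike.norm_conj]
      rw [hqΛ n]
      rw [h3] at h2
      exact h2
    have h4 := mul_le_mul_of_nonneg_left h1 (hw0 n)
    calc w n * ‖q n‖ ^ 2 ≤ w n * (2 * ‖Λ n‖ ^ 2 + 2 * (‖α‖ ^ 2 * ‖shf Λ n‖ ^ 2)) := h4
      _ = 2 * (w n * ‖Λ n‖ ^ 2) + 2 * ‖α‖ ^ 2 * (w n * ‖shf Λ n‖ ^ 2) := by ring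
  refine ⟨hq2, ?_⟩
  have hd : ∀ n, w n * ‖p n‖ ^ 2 - w n * ‖q n‖ ^ 2
      = (1 - ‖α‖ ^ 2) * (w n * (shfR (fun k => ‖Λ k‖ ^ 2) n - ‖Λ n‖ ^ 2)) := by
    intro n
    rw [hpΛ n, hqΛ n, ← mul_sub, key_alg, ← hshf_norm n]
    ring
  have hds : Summable (fun n => w n * ‖p n‖ ^ 2 - w n * ‖q n‖ ^ 2) := hpw.sub hq2
  have hpartial : Tendsto (fun N => ∑ n ∈ range N, (w n * ‖p n‖ ^ 2 - w n * ‖q n‖ ^ 2)) atTop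
      (𝓝 (∑' n, w n * ‖p n‖ ^ 2 - ∑' n, w n * ‖q n‖ ^ 2)) := by
    have h := hds.hasSum.tendsto_sum_nat
    rwa [Summable.tsum_sub hpw hq2] at h
  have hre : ∀ N : ℕ, ∑ n ∈ range (N + 1), (w n * ‖p n‖ ^ 2 - w n * ‖q n‖ ^ 2)
      = (1 - ‖α‖ ^ 2) * ((∑ k ∈ range N, c * ‖Λ k‖ ^ 2) - w N * ‖Λ N‖ ^ 2) := by
    intro N
    calc ∑ n ∈ range (N + 1), (w n * ‖p n‖ ^ 2 - w n * ‖q n‖ ^ 2)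
        = ∑ n ∈ range (N + 1),
            (1 - ‖α‖ ^ 2) * (w n * (shfR (fun k => ‖Λ k‖ ^ 2) n - ‖Λ n‖ ^ 2)) :=
          Finset.sum_congr rfl (fun n _ => hd n)
      _ = (1 - ‖α‖ ^ 2) * ∑ n ∈ range (N + 1),
            w n * (shfR (fun k => ‖Λ k‖ ^ 2) n - ‖Λ n‖ ^ 2) := by rw [← Finset.mul_sum]
      _ = (1 - ‖α‖ ^ 2) * ((∑ k ∈ range N, c * ‖Λ k‖ ^ 2) - w N * ‖Λ N‖ ^ 2) := by
          rw [telescope w c hwd _ N]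
  have hA : Tendsto (fun N => ∑ n ∈ range (N + 1), (w n * ‖p n‖ ^ 2 - w n * ‖q n‖ ^ 2)) atTop
      (𝓝 ((1 - ‖α‖ ^ 2) * ∑' n, c * ‖Λ n‖ ^ 2)) := by
    have h1 : Tendsto (fun N => (∑ k ∈ range N, c * ‖Λ k‖ ^ 2) - w N * ‖Λ N‖ ^ 2) atTop
        (𝓝 (∑' n, c * ‖Λ n‖ ^ 2 - 0)) := (hΛc.hasSum.tendsto_sum_nat).sub hΛ0
    rw [sub_zero] at h1
    have h2 := h1.const_mul (1 - ‖α‖ ^ 2)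
    refine Tendsto.congr (fun N => ?_) h2
    exact (hre N).symm
  have hA' : Tendsto (fun N => ∑ n ∈ range N, (w n * ‖p n‖ ^ 2 - w n * ‖q n‖ ^ 2)) atTop
      (𝓝 ((1 - ‖α‖ ^ 2) * ∑' n, c * ‖Λ n‖ ^ 2)) := by
    rw [← tendsto_add_atTop_iff_nat 1]
    exact hA
  have := tendsto_nhds_unique hpartial hA'
  linarith

lemma iscoeffs_congr {a : ℕ → ℂ} {A B : ℂ → ℂ} (h : IsCoeffs a A)
    (hAB : ∀ z : ℂ, ‖z‖ < 1 → A z = B z) : IsCoeffs a B := by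
  intro z hz
  rw [← hAB z hz]
  exact h z hz

lemma hasSum_shf {a : ℕ → ℂ} {z s : ℂ} (h : HasSum (fun n => a n * z ^ n) s) :
    HasSum (fun n => shf a n * z ^ n) (z * s) := by
  have h1 : HasSum (fun n => shf a (n + 1) * z ^ (n + 1)) (z * s) := by
    have h2 := h.mul_left z
    have : (fun n => shf a (n + 1) * z ^ (n + 1)) = fun n => z * (a n * z ^ n) := by
      funext n; rw [shf_succ]; ring
    rw [this]
    exact h2
  have h3 := (hasSum_nat_add_iff (f := fun n => shf a n * z ^ n) 1).mp h1
  simpa [shf_zero] using h3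

lemma iscoeffs_bound {a : ℕ → ℂ} {A : ℂ → ℂ} (h : IsCoeffs a A) {ρ : ℝ}
    (h0 : 0 ≤ ρ) (h1 : ρ < 1) : ∃ M : ℝ, ∀ n, ‖a n‖ * ρ ^ n ≤ M := by
  have hz : ‖(ρ : ℂ)‖ < 1 := by
    rw [Complex.norm_real, Real.norm_eq_abs]
    rwa [abs_of_nonneg h0]
  have hs := (h (ρ : ℂ) hz).summable
  have h2 : Tendsto (fun n => ‖a n * (ρ : ℂ) ^ n‖) atTop (𝓝 0) := by
    have := hs.tendsto_atTop_zero.norm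
    simpa using this
  obtain ⟨M, hM⟩ := h2.bddAbove_range
  refine ⟨M, fun n => ?_⟩
  have : ‖a n * (ρ : ℂ) ^ n‖ = ‖a n‖ * ρ ^ n := by
    rw [norm_mul, norm_pow, Complex.norm_real, Real.norm_eq_abs, abs_of_nonneg h0]
  rw [← this]
  exact hM ⟨n, rfl⟩

lemma iscoeffs_fps {a : ℕ → ℂ} {A : ℂ → ℂ} (h : IsCoeffs a A) :
    HasFPowerSeriesOnBall A (FormalMultilinearSeries.ofScalars ℂ a) 0 1 := by
  constructor
  · refine ENNReal.le_of_forall_nnreal_lt (fun r hr => ?_)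
    apply FormalMultilinearSeries.le_radius_of_summable
    have hr1 : (r : ℝ) < 1 := by exact_mod_cast hr
    have hr0 : (0:ℝ) ≤ (r:ℝ) := r.coe_nonneg
    obtain ⟨ρ, hρpos, hρ1, hrρ⟩ : ∃ ρ : ℝ, 0 < ρ ∧ ρ < 1 ∧ (r:ℝ) < ρ :=
      ⟨((r : ℝ) + 1) / 2, by linarith, by linarith, by linarith⟩
    have hρ0 : (0:ℝ) ≤ ρ := le_of_lt hρpos
    obtain ⟨M, hM⟩ := iscoeffs_bound h hρ0 hρ1
    refine Summable.of_nonneg_of_le (fun n => ?_) (fun n => ?_)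
      ((summable_geometric_of_lt_one (div_nonneg hr0 hρ0)
        (by rw [div_lt_one hρpos]; exact hrρ)).mul_left M)
    · positivity
    · have he : ‖FormalMultilinearSeries.ofScalars ℂ a n‖ * (r : ℝ) ^ n
          = (‖a n‖ * ρ ^ n) * ((r : ℝ) / ρ) ^ n := by
        rw [FormalMultilinearSeries.ofScalars_norm, div_pow]
        field_simp
      rw [he]
      exact mul_le_mul_of_nonneg_right (hM n)
        (pow_nonneg (div_nonneg hr0 hρ0) n)
  · exact zero_lt_one
  · intro y hy
    rw [EMetric.mem_ball, edist_zero_right, enorm_eq_nnnorm] at hy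
    have hy' : ‖y‖ < 1 := by
      exact_mod_cast hy
    have hs := h y hy'
    rw [zero_add]
    have he : (fun n => (FormalMultilinearSeries.ofScalars ℂ a n) fun _ => y)
        = fun n => a n * y ^ n := by
      funext n
      rw [FormalMultilinearSeries.ofScalars_apply_eq, smul_eq_mul]
    rw [he]
    exact hs

lemma iscoeffs_unique {a b : ℕ → ℂ} {A : ℂ → ℂ} (h1 : IsCoeffs a A) (h2 : IsCoeffs b A) :
    a = b := by
  have e := (iscoeffs_fps h1).hasFPowerSeriesAt.eq_formalMultilinearSeries
    (iscoeffs_fps h2).hasFPowerSeriesAt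
  exact FormalMultilinearSeries.ofScalars_series_injective ℂ ℂ e

lemma iscoeffs_continuousAt {a : ℕ → ℂ} {A : ℂ → ℂ} (h : IsCoeffs a A) {w : ℂ}
    (hw : ‖w‖ < 1) : ContinuousAt A w := by
  have hb := (iscoeffs_fps h).continuousOn
  refine hb.continuousAt (EMetric.isOpen_ball.mem_nhds ?_)
  rw [EMetric.mem_ball, edist_zero_right, enorm_eq_nnnorm]
  exact_mod_cast hw

lemma peel_s5 (α : ℂ) (hα : ‖α‖ < 1) (P Q : ℂ → ℂ) (p : ℕ → ℂ)
    (hp : IsCoeffs p P) (hp2 : Summable fun n => ‖p n‖ ^ 2)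
    (hPQ : ∀ z : ℂ, ‖z‖ < 1 → P z = (z - α) / (1 - (starRingEnd ℂ) α * z) * Q z)
    (hQc : ContinuousAt Q α) :
    ∃ Λ q : ℕ → ℂ,
      (∀ n, p n = shf Λ n - α * Λ n) ∧
      (∀ n, q n = Λ n - (starRingEnd ℂ) α * shf Λ n) ∧
      Summable (fun n => ‖Λ n‖ ^ 2) ∧
      IsCoeffs Λ (fun z => (1 - (starRingEnd ℂ) α * z)⁻¹ * Q z) ∧
      IsCoeffs q Q ∧
      (Summable (fun n : ℕ => (n : ℝ) * ‖p n‖ ^ 2) → Summable (fun n : ℕ => (n : ℝ) * ‖Λ n‖ ^ 2)) := by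
  have hr0 : (0:ℝ) ≤ ‖α‖ := norm_nonneg α
  have hT2 : ∀ k, ‖p k‖ ^ 2 ≤ ∑' i, ‖p i‖ ^ 2 := fun k =>
    Summable.le_tsum hp2 k (fun j _ => sq_nonneg _)
  have hBp : ∀ k, ‖p k‖ ≤ Real.sqrt (∑' i, ‖p i‖ ^ 2) := fun k => by
    have h2 : ‖p k‖ = Real.sqrt (‖p k‖ ^ 2) := (Real.sqrt_sq (norm_nonneg _)).symm
    rw [h2]
    exact Real.sqrt_le_sqrt (hT2 k)
  have hgeo := summable_geometric_of_lt_one hr0 hα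
  have hnormsum : ∀ n, Summable (fun j => ‖α ^ j * p (n + 1 + j)‖) := fun n => by
    refine Summable.of_nonneg_of_le (fun j => norm_nonneg _) (fun j => ?_)
      (hgeo.mul_right (Real.sqrt (∑' i, ‖p i‖ ^ 2)))
    rw [norm_mul, norm_pow]
    exact mul_le_mul_of_nonneg_left (hBp _) (pow_nonneg hr0 _)
  have hsumj : ∀ n, Summable (fun j => α ^ j * p (n + 1 + j)) := fun n =>
    (hnormsum n).of_norm
  set Λ : ℕ → ℂ := fun n => ∑' j, α ^ j * p (n + 1 + j) with hΛdef
  have hrec : ∀ n, Λ n = p (n + 1) + α * Λ (n + 1) := by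
    intro n
    have h0 := Summable.tsum_eq_zero_add (hsumj n)
    have h1 : ∑' j : ℕ, α ^ (j + 1) * p (n + 1 + (j + 1)) = α * Λ (n + 1) := by
      rw [hΛdef, ← tsum_mul_left]
      refine tsum_congr (fun j => ?_)
      have he : n + 1 + (j + 1) = n + 1 + 1 + j := by omega
      rw [he, pow_succ]
      ring
    rw [h1] at h0
    simpa using h0
  have hPα : HasSum (fun n => p n * α ^ n) 0 := by
    have h1 := hp α hα
    rw [hPQ α hα] at h1
    simpa using h1
  have hrec0 : p 0 = - (α * Λ 0) := by
    have h0 := Summable.tsum_eq_zero_add hPα.summable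
    rw [hPα.tsum_eq] at h0
    have h1 : ∑' n : ℕ, p (n + 1) * α ^ (n + 1) = α * Λ 0 := by
      rw [hΛdef, ← tsum_mul_left]
      refine tsum_congr (fun j => ?_)
      have he : 0 + 1 + j = j + 1 := by omega
      rw [he, pow_succ]
      ring
    rw [h1] at h0
    simp only [pow_zero, mul_one] at h0
    linear_combination -h0
  have hpΛ : ∀ n, p n = shf Λ n - α * Λ n := by
    intro n
    cases n with
    | zero => rw [shf_zero, hrec0]; ring
    | succ n => rw [shf_succ]; linear_combination -hrec n
  have hnorm : ∀ n, ‖Λ n‖ ≤ ∑' j, ‖α‖ ^ j * ‖p (n + 1 + j)‖ := by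
    intro n
    have h1 := norm_tsum_le_tsum_norm (hnormsum n)
    calc ‖Λ n‖ ≤ ∑' j, ‖α ^ j * p (n + 1 + j)‖ := h1
      _ = ∑' j, ‖α‖ ^ j * ‖p (n + 1 + j)‖ := tsum_congr fun j => by rw [norm_mul, norm_pow]
  have hvj : ∀ n, Summable (fun j => ‖α‖ ^ j * ‖p (n + 1 + j)‖ ^ 2) := fun n => by
    refine Summable.of_nonneg_of_le (fun j => mul_nonneg (pow_nonneg hr0 _) (sq_nonneg _))
      (fun j => mul_le_mul_of_nonneg_left (hT2 _) (pow_nonneg hr0 _)) (hgeo.mul_right _)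
  have hCS : ∀ n, ‖Λ n‖ ^ 2 ≤ (1 - ‖α‖)⁻¹ * ∑' j, ‖α‖ ^ j * ‖p (n + 1 + j)‖ ^ 2 := by
    intro n
    have h1 : ‖Λ n‖ ^ 2 ≤ (∑' j, ‖α‖ ^ j * ‖p (n + 1 + j)‖) ^ 2 :=
      pow_le_pow_left₀ (norm_nonneg _) (hnorm n) 2
    have sf : Summable (fun j => Real.sqrt (‖α‖ ^ j) ^ 2) := by
      have ef : (fun j => Real.sqrt (‖α‖ ^ j) ^ 2) = fun j => ‖α‖ ^ j :=
        funext fun j => Real.sq_sqrt (pow_nonneg hr0 j)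
      rw [ef]; exact hgeo
    have sg : Summable (fun j => (Real.sqrt (‖α‖ ^ j) * ‖p (n + 1 + j)‖) ^ 2) := by
      have eg : (fun j => (Real.sqrt (‖α‖ ^ j) * ‖p (n + 1 + j)‖) ^ 2)
          = fun j => ‖α‖ ^ j * ‖p (n + 1 + j)‖ ^ 2 :=
        funext fun j => by rw [mul_pow, Real.sq_sqrt (pow_nonneg hr0 j)]
      rw [eg]; exact hvj n
    have h2 := tsum_cs (f := fun j => Real.sqrt (‖α‖ ^ j))
      (g := fun j => Real.sqrt (‖α‖ ^ j) * ‖p (n + 1 + j)‖)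
      (fun j => Real.sqrt_nonneg _) (fun j => mul_nonneg (Real.sqrt_nonneg _) (norm_nonneg _))
      sf sg
    have h3 : ∑' j, Real.sqrt (‖α‖ ^ j) * (Real.sqrt (‖α‖ ^ j) * ‖p (n + 1 + j)‖)
        = ∑' j, ‖α‖ ^ j * ‖p (n + 1 + j)‖ :=
      tsum_congr fun j => by rw [← mul_assoc, Real.mul_self_sqrt (pow_nonneg hr0 j)]
    have h4 : ∑' j, Real.sqrt (‖α‖ ^ j) ^ 2 = (1 - ‖α‖)⁻¹ := by
      rw [show (fun j => Real.sqrt (‖α‖ ^ j) ^ 2) = fun j => ‖α‖ ^ j from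
        funext fun j => Real.sq_sqrt (pow_nonneg hr0 j)]
      exact tsum_geometric_of_lt_one hr0 hα
    have h5 : ∑' j, (Real.sqrt (‖α‖ ^ j) * ‖p (n + 1 + j)‖) ^ 2
        = ∑' j, ‖α‖ ^ j * ‖p (n + 1 + j)‖ ^ 2 :=
      tsum_congr fun j => by rw [mul_pow, Real.sq_sqrt (pow_nonneg hr0 j)]
    rw [h3, h4, h5] at h2
    exact h1.trans h2
  have hv : Summable (fun n => ∑' j, ‖α‖ ^ j * ‖p (n + 1 + j)‖ ^ 2) :=
    tailsum (s := fun k => ‖p k‖ ^ 2) hr0 hα (fun k => sq_nonneg _) hp2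
  have hΛ2 : Summable (fun n => ‖Λ n‖ ^ 2) :=
    Summable.of_nonneg_of_le (fun n => sq_nonneg _) hCS (hv.mul_left (1 - ‖α‖)⁻¹)
  have hwgt : Summable (fun n : ℕ => (n:ℝ) * ‖p n‖ ^ 2) →
      Summable (fun n : ℕ => (n:ℝ) * ‖Λ n‖ ^ 2) := by
    intro hp1
    have hinv0 : (0:ℝ) ≤ (1 - ‖α‖)⁻¹ := inv_nonneg.mpr (by linarith)
    have ht : ∀ k : ℕ, (k:ℝ) * ‖p k‖ ^ 2 ≤ ∑' i : ℕ, (i:ℝ) * ‖p i‖ ^ 2 :=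
      fun k => Summable.le_tsum hp1 k (fun j _ => mul_nonneg (Nat.cast_nonneg j) (sq_nonneg _))
    have hvj' : ∀ n, Summable (fun j => ‖α‖ ^ j * (((n + 1 + j : ℕ):ℝ) * ‖p (n + 1 + j)‖ ^ 2)) :=
      fun n => by
      refine Summable.of_nonneg_of_le (fun j => mul_nonneg (pow_nonneg hr0 _)
        (mul_nonneg (Nat.cast_nonneg _) (sq_nonneg _)))
        (fun j => mul_le_mul_of_nonneg_left (ht _) (pow_nonneg hr0 _)) (hgeo.mul_right _)
    have htv : Summable (fun n => ∑' j, ‖α‖ ^ j * (((n + 1 + j:ℕ):ℝ) * ‖p (n + 1 + j)‖ ^ 2)) :=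
      tailsum (s := fun k : ℕ => (k:ℝ) * ‖p k‖ ^ 2) hr0 hα (fun k => mul_nonneg (Nat.cast_nonneg k) (sq_nonneg _)) hp1
    refine Summable.of_nonneg_of_le (fun n => mul_nonneg (Nat.cast_nonneg n) (sq_nonneg _))
      (fun n => ?_) (htv.mul_left (1 - ‖α‖)⁻¹)
    calc (n:ℝ) * ‖Λ n‖ ^ 2
        ≤ (n:ℝ) * ((1 - ‖α‖)⁻¹ * ∑' j, ‖α‖ ^ j * ‖p (n + 1 + j)‖ ^ 2) :=
          mul_le_mul_of_nonneg_left (hCS n) (Nat.cast_nonneg n)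
      _ = (1 - ‖α‖)⁻¹ * ∑' j, (n:ℝ) * (‖α‖ ^ j * ‖p (n + 1 + j)‖ ^ 2) := by
          rw [tsum_mul_left]; ring
      _ ≤ (1 - ‖α‖)⁻¹ * ∑' j, ‖α‖ ^ j * (((n + 1 + j:ℕ):ℝ) * ‖p (n + 1 + j)‖ ^ 2) := by
          refine mul_le_mul_of_nonneg_left (Summable.tsum_le_tsum (fun j => ?_) ((hvj n).mul_left (n:ℝ))
            (hvj' n)) hinv0
          have hcast : (n:ℝ) ≤ ((n + 1 + j:ℕ):ℝ) := by
            exact_mod_cast (by omega : n ≤ n + 1 + j)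
          have h0 : (0:ℝ) ≤ ‖α‖ ^ j * ‖p (n + 1 + j)‖ ^ 2 :=
            mul_nonneg (pow_nonneg hr0 _) (sq_nonneg _)
          calc (n:ℝ) * (‖α‖ ^ j * ‖p (n + 1 + j)‖ ^ 2)
              ≤ ((n + 1 + j:ℕ):ℝ) * (‖α‖ ^ j * ‖p (n + 1 + j)‖ ^ 2) :=
                mul_le_mul_of_nonneg_right hcast h0
            _ = ‖α‖ ^ j * (((n + 1 + j:ℕ):ℝ) * ‖p (n + 1 + j)‖ ^ 2) := by ring
  -- the sum function T
  have hBΛ : ∀ k, ‖Λ k‖ ≤ Real.sqrt (∑' i, ‖Λ i‖ ^ 2) := fun k => by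
    have h2 : ‖Λ k‖ = Real.sqrt (‖Λ k‖ ^ 2) := (Real.sqrt_sq (norm_nonneg _)).symm
    rw [h2]
    exact Real.sqrt_le_sqrt (Summable.le_tsum hΛ2 k (fun j _ => sq_nonneg _))
  have hTsum : ∀ z : ℂ, ‖z‖ < 1 → Summable (fun n => Λ n * z ^ n) := fun z hz => by
    refine Summable.of_norm (Summable.of_nonneg_of_le (fun n => norm_nonneg _) (fun n => ?_)
      ((summable_geometric_of_lt_one (norm_nonneg z) hz).mul_left
        (Real.sqrt (∑' i, ‖Λ i‖ ^ 2))))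
    rw [norm_mul, norm_pow]
    exact mul_le_mul_of_nonneg_right (hBΛ n) (pow_nonneg (norm_nonneg z) n)
  set T : ℂ → ℂ := fun z => ∑' n, Λ n * z ^ n with hTdef
  have hTco : IsCoeffs Λ T := fun z hz => (hTsum z hz).hasSum
  have hden : ∀ z : ℂ, ‖z‖ < 1 → (1 - (starRingEnd ℂ) α * z) ≠ 0 := by
    intro z hz heq
    have h1 : (1:ℂ) = (starRingEnd ℂ) α * z := by linear_combination heq
    have h2 : (1:ℝ) = ‖(starRingEnd ℂ) α * z‖ := by rw [← h1, norm_one]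
    rw [norm_mul, RCLike.norm_conj] at h2
    nlinarith [norm_nonneg z, norm_nonneg α]
  have hPT : ∀ z : ℂ, ‖z‖ < 1 → (z - α) * T z = P z := by
    intro z hz
    have hs := hTco z hz
    have h1 := (hasSum_shf hs).sub (hs.mul_left α)
    have h2 : (fun n => shf Λ n * z ^ n - α * (Λ n * z ^ n)) = fun n => p n * z ^ n := by
      funext n; rw [hpΛ n]; ring
    rw [h2] at h1
    have h3 := h1.unique (hp z hz)
    linear_combination h3
  have hTR' : ∀ z : ℂ, ‖z‖ < 1 → z ≠ α →
      T z = (1 - (starRingEnd ℂ) α * z)⁻¹ * Q z := by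
    intro z hz hzα
    have h1 := hPT z hz
    rw [hPQ z hz] at h1
    have hne : z - α ≠ 0 := sub_ne_zero.mpr hzα
    have hd := hden z hz
    refine mul_left_cancel₀ hne ?_
    rw [h1, div_eq_mul_inv]
    ring
  have hTRα : T α = (1 - (starRingEnd ℂ) α * α)⁻¹ * Q α := by
    have hTc : ContinuousAt T α := iscoeffs_continuousAt hTco hα
    have hRc : ContinuousAt (fun z => (1 - (starRingEnd ℂ) α * z)⁻¹ * Q z) α := by
      refine ContinuousAt.mul (ContinuousAt.inv₀ ?_ (hden α hα)) hQc
      exact continuousAt_const.sub (continuousAt_const.mul continuousAt_id)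
    have hball : ∀ᶠ z in 𝓝 α, ‖z‖ < 1 := by
      have hop : IsOpen {z : ℂ | ‖z‖ < 1} := isOpen_lt continuous_norm continuous_const
      exact eventually_of_mem (hop.mem_nhds hα) (fun z hz => hz)
    have hev : ∀ᶠ z in 𝓝[≠] α, T z = (1 - (starRingEnd ℂ) α * z)⁻¹ * Q z := by
      filter_upwards [hball.filter_mono nhdsWithin_le_nhds, self_mem_nhdsWithin] with z hz1 hz2
      exact hTR' z hz1 hz2
    have l1 : Tendsto T (𝓝[≠] α) (𝓝 (T α)) := hTc.tendsto.mono_left nhdsWithin_le_nhds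
    have l2 : Tendsto (fun z => (1 - (starRingEnd ℂ) α * z)⁻¹ * Q z) (𝓝[≠] α)
        (𝓝 ((1 - (starRingEnd ℂ) α * α)⁻¹ * Q α)) := hRc.tendsto.mono_left nhdsWithin_le_nhds
    have l1' : Tendsto T (𝓝[≠] α) (𝓝 ((1 - (starRingEnd ℂ) α * α)⁻¹ * Q α)) :=
      l2.congr' (hev.mono fun z h => h.symm)
    exact tendsto_nhds_unique l1 l1'
  have hTR : ∀ z : ℂ, ‖z‖ < 1 → T z = (1 - (starRingEnd ℂ) α * z)⁻¹ * Q z := by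
    intro z hz
    by_cases hzα : z = α
    · rw [hzα]; exact hTRα
    · exact hTR' z hz hzα
  have hΛco : IsCoeffs Λ (fun z => (1 - (starRingEnd ℂ) α * z)⁻¹ * Q z) := by
    intro z hz
    have := hTco z hz
    rwa [hTR z hz] at this
  refine ⟨Λ, fun n => Λ n - (starRingEnd ℂ) α * shf Λ n, hpΛ, fun n => rfl, hΛ2, hΛco, ?_, hwgt⟩
  intro z hz
  have hs := hTco z hz
  have h1 := hs.sub ((hasSum_shf hs).mul_left ((starRingEnd ℂ) α))
  have h2 : (fun n => Λ n * z ^ n - (starRingEnd ℂ) α * (shf Λ n * z ^ n))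
      = fun n => (Λ n - (starRingEnd ℂ) α * shf Λ n) * z ^ n := by
    funext n; ring
  rw [h2] at h1
  have h3 : T z - (starRingEnd ℂ) α * (z * T z) = Q z := by
    rw [hTR z hz]
    have hd := hden z hz
    field_simp
  rwa [h3] at h1

lemma den_ne {β z : ℂ} (hβ : ‖β‖ < 1) (hz : ‖z‖ < 1) :
    (1 - (starRingEnd ℂ) β * z) ≠ 0 := by
  intro heq
  have h1 : (1:ℂ) = (starRingEnd ℂ) β * z := by linear_combination heq
  have h2 : (1:ℝ) = ‖(starRingEnd ℂ) β * z‖ := by rw [← h1, norm_one]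
  rw [norm_mul, RCLike.norm_conj] at h2
  nlinarith [norm_nonneg z, norm_nonneg β]

lemma contAt_prod {s : Finset ℕ} {b : ℕ → ℂ → ℂ} {x : ℂ}
    (h : ∀ j ∈ s, ContinuousAt (b j) x) :
    ContinuousAt (fun z => ∏ j ∈ s, b j z) x := by
  classical
  induction s using Finset.induction_on with
  | empty => simpa using continuousAt_const
  | @insert a s ha ih =>
    have he : (fun z => ∏ j ∈ insert a s, b j z) = fun z => b a z * ∏ j ∈ s, b j z := by
      funext z; rw [Finset.prod_insert ha]
    rw [he]
    exact (h a (Finset.mem_insert_self a s)).mul (ih fun j hj => h j (Finset.mem_insert_of_mem hj))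

lemma blaschke_contAt {β x : ℂ} (hβ : ‖β‖ < 1) (hx : ‖x‖ < 1) :
    ContinuousAt (fun z => (z - β) / (1 - (starRingEnd ℂ) β * z)) x := by
  refine ContinuousAt.div (continuousAt_id.sub continuousAt_const) ?_ (den_ne hβ hx)
  exact continuousAt_const.sub (continuousAt_const.mul continuousAt_id)

lemma iso : ∀ (m : ℕ) (α : ℕ → ℂ), (∀ j ∈ Icc 1 m, ‖α j‖ < 1) →
    ∀ (W : ℂ → ℂ) (u v : ℕ → ℂ),
    IsCoeffs u (fun z => (∏ j ∈ Icc 1 m, (z - α j) / (1 - (starRingEnd ℂ) (α j) * z)) * W z) →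
    IsCoeffs v W → Summable (fun n => ‖u n‖ ^ 2) →
    Summable (fun n => ‖v n‖ ^ 2) ∧ ∑' n, ‖v n‖ ^ 2 = ∑' n, ‖u n‖ ^ 2 := by
  intro m
  induction m with
  | zero =>
    intro α hα W u v hu hv hu2
    have hu' : IsCoeffs u W := by
      refine iscoeffs_congr hu (fun z hz => ?_)
      simp
    have he := iscoeffs_unique hu' hv
    rw [← he]
    exact ⟨hu2, rfl⟩
  | succ m ih =>
    intro α hα W u v hu hv hu2
    have hα' : ‖α (m+1)‖ < 1 := hα (m+1) (by simp [Finset.mem_Icc])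
    have hPQ : ∀ z : ℂ, ‖z‖ < 1 →
        (∏ j ∈ Icc 1 (m+1), (z - α j) / (1 - (starRingEnd ℂ) (α j) * z)) * W z
          = (z - α (m+1)) / (1 - (starRingEnd ℂ) (α (m+1)) * z) *
            ((∏ j ∈ Icc 1 m, (z - α j) / (1 - (starRingEnd ℂ) (α j) * z)) * W z) := by
      intro z hz
      rw [Finset.prod_Icc_succ_top (by omega : 1 ≤ m + 1)]
      ring
    have hQc : ContinuousAt
        (fun z => (∏ j ∈ Icc 1 m, (z - α j) / (1 - (starRingEnd ℂ) (α j) * z)) * W z)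
        (α (m+1)) := by
      refine ContinuousAt.mul (contAt_prod fun j hj => ?_) (iscoeffs_continuousAt hv hα')
      have hj' : ‖α j‖ < 1 := hα j (by simp [Finset.mem_Icc] at hj ⊢; omega)
      exact blaschke_contAt hj' hα'
    obtain ⟨Λ, q, hpΛ, hqΛ, hΛ2, hΛco, hqco, hwgt⟩ :=
      peel_s5 (α (m+1)) hα' _ _ u hu hu2 hPQ hQc
    have hstep := step_s5 (α (m+1)) (fun _ => (1:ℝ)) (fun _ => zero_le_one) 0
      (fun n => by ring) Λ u q hpΛ hqΛ (by simpa using hΛ2) (by simpa using summable_zero)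
      (by simpa using hΛ2.tendsto_atTop_zero) (by simpa using hu2)
    have hq2 : Summable (fun n => ‖q n‖ ^ 2) := by simpa using hstep.1
    have hqeq : ∑' n, ‖q n‖ ^ 2 = ∑' n, ‖u n‖ ^ 2 := by
      have h2 := hstep.2
      simpa using h2
    obtain ⟨hv2, hveq⟩ := ih α (fun j hj => hα j (by simp [Finset.mem_Icc] at hj ⊢; omega))
      W q v hqco hv hq2
    exact ⟨hv2, by rw [hveq, hqeq]⟩

lemma main_aux : ∀ (m : ℕ) (α : ℕ → ℂ), (∀ j ∈ Icc 1 m, ‖α j‖ < 1) →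
    ∀ (F G : ℂ → ℂ) (f g : ℕ → ℂ) (K : ℕ → ℕ → ℂ),
    IsCoeffs f F → IsCoeffs g G →
    (∀ z : ℂ, ‖z‖ < 1 →
      F z = (∏ j ∈ Icc 1 m, (z - α j) / (1 - (starRingEnd ℂ) (α j) * z)) * G z) →
    (∀ j ∈ Icc 1 m, ∀ z : ℂ, ‖z‖ < 1 →
      HasSum (fun n => K j n * z ^ n) (G z / (1 - (starRingEnd ℂ) (α j) * z))) →
    (Summable fun n => ‖f n‖ ^ 2) → (Summable fun n : ℕ => (n:ℝ) * ‖f n‖ ^ 2) →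
    (∀ j ∈ Icc 1 m, Summable fun n => ‖K j n‖ ^ 2) ∧
      (Summable fun n : ℕ => (n:ℝ) * ‖g n‖ ^ 2) ∧
      ∑' n : ℕ, (n:ℝ) * ‖g n‖ ^ 2
        = ∑' n : ℕ, (n:ℝ) * ‖f n‖ ^ 2
          - ∑ j ∈ Icc 1 m, (1 - ‖α j‖ ^ 2) * ∑' n, ‖K j n‖ ^ 2 := by
  intro m
  induction m with
  | zero =>
    intro α hα F G f g K hf hg hfac hK hf2 hf1
    have hf' : IsCoeffs f G := iscoeffs_congr hf (fun z hz => by simpa using hfac z hz)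
    have he := iscoeffs_unique hf' hg
    rw [← he]
    refine ⟨by simp, hf1, by simp⟩
  | succ m ih =>
    intro α hα F G f g K hf hg hfac hK hf2 hf1
    have hα' : ‖α (m+1)‖ < 1 := hα (m+1) (by simp [Finset.mem_Icc])
    have hαm : ∀ j ∈ Icc 1 m, ‖α j‖ < 1 :=
      fun j hj => hα j (by simp [Finset.mem_Icc] at hj ⊢; omega)
    set Q : ℂ → ℂ :=
      fun z => (∏ j ∈ Icc 1 m, (z - α j) / (1 - (starRingEnd ℂ) (α j) * z)) * G z with hQdef
    have hPQ : ∀ z : ℂ, ‖z‖ < 1 →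
        F z = (z - α (m+1)) / (1 - (starRingEnd ℂ) (α (m+1)) * z) * Q z := by
      intro z hz
      rw [hfac z hz, hQdef, Finset.prod_Icc_succ_top (by omega : 1 ≤ m + 1)]
      ring
    have hQc : ContinuousAt Q (α (m+1)) := by
      refine ContinuousAt.mul (contAt_prod fun j hj => ?_) (iscoeffs_continuousAt hg hα')
      exact blaschke_contAt (hαm j hj) hα'
    obtain ⟨Λ, q, hpΛ, hqΛ, hΛ2, hΛco, hqco, hwgt⟩ :=
      peel_s5 (α (m+1)) hα' F Q f hf hf2 hPQ hQc
    have hΛ1 : Summable (fun n : ℕ => (n:ℝ) * ‖Λ n‖ ^ 2) := hwgt hf1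
    have hstep0 := step_s5 (α (m+1)) (fun _ => (1:ℝ)) (fun _ => zero_le_one) 0
      (fun n => by ring) Λ f q hpΛ hqΛ (by simpa using hΛ2) (by simpa using summable_zero)
      (by simpa using hΛ2.tendsto_atTop_zero) (by simpa using hf2)
    have hq2 : Summable (fun n => ‖q n‖ ^ 2) := by simpa using hstep0.1
    have hstep1 := step_s5 (α (m+1)) (fun n : ℕ => (n:ℝ)) (fun n => Nat.cast_nonneg n) 1
      (fun n => by push_cast; ring) Λ f q hpΛ hqΛ hΛ1 (by simpa using hΛ2)
      hΛ1.tendsto_atTop_zero hf1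
    have hq1 : Summable (fun n : ℕ => (n:ℝ) * ‖q n‖ ^ 2) := hstep1.1
    have heq1 : ∑' n : ℕ, (n:ℝ) * ‖q n‖ ^ 2
        = ∑' n : ℕ, (n:ℝ) * ‖f n‖ ^ 2 - (1 - ‖α (m+1)‖ ^ 2) * ∑' n, ‖Λ n‖ ^ 2 := by
      have h2 := hstep1.2
      simpa using h2
    obtain ⟨hKs, hg1, heqg⟩ := ih α hαm Q G q g K hqco hg (fun z _ => rfl)
      (fun j hj z hz => hK j (by simp [Finset.mem_Icc] at hj ⊢; omega) z hz) hq2 hq1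
    have hΛco' : IsCoeffs Λ (fun z =>
        (∏ j ∈ Icc 1 m, (z - α j) / (1 - (starRingEnd ℂ) (α j) * z)) *
          (G z / (1 - (starRingEnd ℂ) (α (m+1)) * z))) := by
      refine iscoeffs_congr hΛco (fun z hz => ?_)
      rw [hQdef]
      rw [div_eq_mul_inv]
      ring
    have hKco : IsCoeffs (K (m+1))
        (fun z => G z / (1 - (starRingEnd ℂ) (α (m+1)) * z)) :=
      fun z hz => hK (m+1) (by simp [Finset.mem_Icc]) z hz
    obtain ⟨hK2, hKeq⟩ := iso m α hαm _ Λ (K (m+1)) hΛco' hKco hΛ2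
    refine ⟨?_, hg1, ?_⟩
    · intro j hj
      by_cases hjm : j = m + 1
      · rw [hjm]; exact hK2
      · exact hKs j (by simp [Finset.mem_Icc] at hj ⊢; omega)
    · rw [heqg, heq1, Finset.sum_Icc_succ_top (by omega : 1 ≤ m + 1), hKeq]
      ring


/-- Corollary 1: if `γ_{n+1}-γ_n ≡ C > 0` and `F ∈ X_γ` has finitely many zeros in `𝔻`
with Blaschke decomposition `F = B·G`, then
`‖G‖_{X_γ}² = ‖F‖_{X_γ}² − Σ_j (1-|α_j|²)‖G/(1-ᾱ_j·)‖_{Y_γ}²`. -/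
theorem stmt5 (γ : ℕ → ℝ) (hmono : Monotone γ) (h0 : γ 0 = 0)
    (C : ℝ) (hC : 0 < C) (hdiff : ∀ n, γ (n + 1) - γ n = C)
    (m : ℕ) (α : ℕ → ℂ) (hα : ∀ j ∈ Icc 1 m, ‖α j‖ < 1)
    (F G : ℂ → ℂ) (f g : ℕ → ℂ) (K : ℕ → ℕ → ℂ)
    (hf : IsCoeffs f F) (hg : IsCoeffs g G)
    (hG0 : ∀ z : ℂ, ‖z‖ < 1 → G z ≠ 0)
    (hfac : ∀ z : ℂ, ‖z‖ < 1 →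
      F z = (∏ j ∈ Icc 1 m, (z - α j) / (1 - (starRingEnd ℂ) (α j) * z)) * G z)
    -- `K j` are the Taylor coefficients of `G(z)/(1-ᾱ_j z)`
    (hK : ∀ j ∈ Icc 1 m, ∀ z : ℂ, ‖z‖ < 1 →
      HasSum (fun n => K j n * z ^ n) (G z / (1 - (starRingEnd ℂ) (α j) * z)))
    (hH2 : Summable fun n => ‖f n‖ ^ 2)
    (hX : Summable fun n => γ n * ‖f n‖ ^ 2) :
    (∀ j ∈ Icc 1 m, Summable fun n => (γ (n + 1) - γ n) * ‖K j n‖ ^ 2) ∧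
      xnorm2 γ g =
        xnorm2 γ f - ∑ j ∈ Icc 1 m, (1 - ‖α j‖ ^ 2) * ynorm2 γ (K j) := by
  have hγ : ∀ n, γ n = C * n := by
    intro n
    induction n with
    | zero => simp [h0]
    | succ n ihn =>
      have hd := hdiff n
      push_cast
      rw [show γ (n + 1) = γ n + C by linarith, ihn]
      ring
  have hf1 : Summable (fun n : ℕ => (n:ℝ) * ‖f n‖ ^ 2) := by
    have h1 : Summable (fun n : ℕ => C⁻¹ * (γ n * ‖f n‖ ^ 2)) := hX.mul_left C⁻¹
    refine h1.congr (fun n => ?_)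
    rw [hγ n]
    field_simp
  obtain ⟨hKs, hg1, heq⟩ := main_aux m α hα F G f g K hf hg hfac hK hH2 hf1
  constructor
  · intro j hj
    exact ((hKs j hj).mul_left C).congr (fun n => by rw [hdiff n])
  · have hx : ∀ a : ℕ → ℂ, xnorm2 γ a = C * ∑' n : ℕ, (n:ℝ) * ‖a n‖ ^ 2 := by
      intro a
      unfold xnorm2
      rw [← tsum_mul_left]
      exact tsum_congr (fun n => by rw [hγ n]; ring)
    have hy : ∀ j, ynorm2 γ (K j) = C * ∑' n, ‖K j n‖ ^ 2 := by
      intro j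
      unfold ynorm2
      rw [← tsum_mul_left]
      exact tsum_congr (fun n => by rw [hdiff n])
    rw [hx g, hx f, heq, mul_sub, Finset.mul_sum]
    congr 1
    refine Finset.sum_congr rfl (fun j hj => ?_)
    rw [hy j]
    ring
end
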